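/- Let X be a finitely supported subset of an invariant set Y such that X contains no infinite uniformly supported subset. Then the uniform powerset ℘_us(X), consisting of all uniformly supported subsets of X, also contains no infinite uniformly supported subset. -/

import Mathlib

open Pointwise

/-- The group of finitary permutations of the set `A` of atoms:
bijections of `A` that move only finitely many atoms. -/
def finPerm (A : Type*) : Subgroup (Equiv.Perm A) where
  carrier := {π | {a | π a ≠ a}.Finite}
  one_mem' := by simp
  mul_mem' := by
    intro π σ hπ hσ
    apply Set.Finite.subset (hπ.union hσ)
    intro a ha
    by_contra hc
    simp only [Set.mem_union, Set.mem_setOf_eq, not_or, not_not] at hc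
    exact ha (by simp [Equiv.Perm.mul_apply, hc.1, hc.2])
  inv_mem' := by
    intro π hπ
    apply Set.Finite.subset hπ
    intro a ha
    simp only [Set.mem_setOf_eq] at ha ⊢
    intro h
    exact ha (Equiv.Perm.inv_eq_iff_eq.mpr h.symm)

/-- `x` is finitely supported: some finite set of atoms supports it. -/
def FinitelySupported (A : Type*) {X : Type*} [MulAction (finPerm A) X] (x : X) : Prop :=
  ∃ S : Set A, S.Finite ∧ MulAction.Supports (finPerm A) S x

/-- A subset `Z` of an `S_A`-set is uniformly supported if a single finite set
of atoms supports every element of `Z`. -/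
def UniformlySupported (A : Type*) {X : Type*} [MulAction (finPerm A) X] (Z : Set X) : Prop :=
  ∃ S : Set A, S.Finite ∧ ∀ x ∈ Z, MulAction.Supports (finPerm A) S x

/-- The least support of `x`: the intersection of all finite sets of atoms supporting `x`. -/
noncomputable def supp (A : Type*) {X : Type*} [MulAction (finPerm A) X] (x : X) : Set A :=
  ⋂₀ {S : Set A | S.Finite ∧ MulAction.Supports (finPerm A) S x}

/-- `Z` contains no infinite uniformly supported subset
(`Z` is "FSM non-uniformly infinite"). -/
def NoInfUS (A : Type*) {X : Type*} [MulAction (finPerm A) X] (Z : Set X) : Prop :=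
  ∀ W ⊆ Z, UniformlySupported A W → W.Finite

/-- The uniform powerset `℘_us(X)`: all uniformly supported subsets of `X`. -/
def usPowerset (A : Type*) {X : Type*} [MulAction (finPerm A) X] (Z : Set X) : Set (Set X) :=
  {W | W ⊆ Z ∧ UniformlySupported A W}

/-- The finite powerset `℘_fin(X)`: all finite subsets of `X`. -/
def finPowerset {X : Type*} (Z : Set X) : Set (Set X) :=
  {W | W ⊆ Z ∧ W.Finite}

/-- `S` supports the function `f` on the domain `X` (Proposition 2.18'(2)):
for every `π` fixing `S` pointwise and every `x ∈ X`, `π • x ∈ X` and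
`f (π • x) = π • f x`. -/
def FnSupportsOn (A : Type*) {Y : Type*} [MulAction (finPerm A) Y]
    (X : Set Y) (S : Set A) (f : Y → Y) : Prop :=
  ∀ π : finPerm A, (∀ a ∈ S, π • a = a) → ∀ x ∈ X, π • x ∈ X ∧ f (π • x) = π • f x

/-- The least support of a function `f` with domain `X`. -/
noncomputable def fnSupp (A : Type*) {Y : Type*} [MulAction (finPerm A) Y]
    (X : Set Y) (f : Y → Y) : Set A :=
  ⋂₀ {S : Set A | S.Finite ∧ FnSupportsOn A X S f}


section Aux

set_option linter.unusedSectionVars false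
attribute [local instance] Classical.decEq

variable {A : Type*} [Infinite A] {Y : Type*} [MulAction (finPerm A) Y]

lemma moved_finite (π : finPerm A) : {a | (π : Equiv.Perm A) a ≠ a}.Finite := π.2

lemma swapFP_mem (a b : A) : Equiv.swap a b ∈ finPerm A := by
  apply Set.Finite.subset ((Set.finite_singleton b).insert a)
  intro c hc
  by_contra hcc
  simp only [Set.mem_insert_iff, Set.mem_singleton_iff, not_or] at hcc
  exact hc (Equiv.swap_apply_of_ne_of_ne hcc.1 hcc.2)

/-- The swap `(a b)` as a finitary permutation. -/
noncomputable def swapFP (a b : A) : finPerm A := ⟨Equiv.swap a b, swapFP_mem a b⟩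

lemma smul_atom (π : finPerm A) (a : A) : π • a = (π : Equiv.Perm A) a := rfl

lemma fix_of_swaps {S : Set A} {x : Y}
    (h : ∀ a b : A, a ∉ S → b ∉ S → swapFP a b • x = x) :
    MulAction.Supports (finPerm A) S x := by
  intro π hπ
  obtain ⟨n, hn⟩ : ∃ n, (moved_finite π).toFinset.card = n := ⟨_, rfl⟩
  induction n using Nat.strong_induction_on generalizing π with
  | _ n ih =>
    rcases Nat.eq_zero_or_pos n with h0 | hpos
    · have hempty : (moved_finite π).toFinset = ∅ := Finset.card_eq_zero.mp (by rw [hn, h0])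
      have : π = 1 := by
        apply Subtype.ext
        ext a
        by_contra ha
        have : a ∈ (moved_finite π).toFinset := by
          simpa only [Set.Finite.mem_toFinset, Set.mem_setOf_eq] using (show (π : Equiv.Perm A) a ≠ a from ha)
        rw [hempty] at this
        exact absurd this (Finset.notMem_empty a)
      rw [this, one_smul]
    · have hne : (moved_finite π).toFinset.Nonempty := by
        rw [← Finset.card_pos, hn]; exact hpos
      obtain ⟨a, ha⟩ := hne
      have haMoved : (π : Equiv.Perm A) a ≠ a := by
        simpa only [Set.Finite.mem_toFinset, Set.mem_setOf_eq] using ha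
      set b := (π : Equiv.Perm A) a with hb
      have haS : a ∉ S := fun hh => haMoved (hπ hh)
      have hbS : b ∉ S := by
        intro hh
        have h1 : (π : Equiv.Perm A) b = b := hπ hh
        exact haMoved ((π : Equiv.Perm A).injective (hb ▸ h1 : (π : Equiv.Perm A) b = (π : Equiv.Perm A) a))
      set σ : finPerm A := swapFP a b * π with hσdef
      have hσS : ∀ c ∈ S, σ • c = c := by
        intro c hc
        have h1 : (π : Equiv.Perm A) c = c := hπ hc
        show (Equiv.swap a b) ((π : Equiv.Perm A) c) = c
        rw [h1]
        exact Equiv.swap_apply_of_ne_of_ne (show c ≠ a from fun e => haS (by rw [← e]; exact hc))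
          (show c ≠ b from fun e => hbS (by rw [← e]; exact hc))
      have hsub : (moved_finite σ).toFinset ⊆ (moved_finite π).toFinset.erase a := by
        intro c hc
        simp only [Set.Finite.mem_toFinset, Set.mem_setOf_eq] at hc
        have hσc : (Equiv.swap a b) ((π : Equiv.Perm A) c) ≠ c := hc
        have hca : c ≠ a := by
          intro e; subst e
          exact hσc (by rw [← hb, Equiv.swap_apply_right])
        refine Finset.mem_erase.mpr ⟨hca, ?_⟩
        simp only [Set.Finite.mem_toFinset, Set.mem_setOf_eq]
        intro hfix
        apply hσc
        rw [hfix]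
        have hcb : c ≠ b := by
          intro e; subst e
          exact haMoved ((π : Equiv.Perm A).injective (hfix.trans hb))
        exact Equiv.swap_apply_of_ne_of_ne hca hcb
      have hcard : (moved_finite σ).toFinset.card < n := by
        calc (moved_finite σ).toFinset.card ≤ ((moved_finite π).toFinset.erase a).card :=
              Finset.card_le_card hsub
          _ < (moved_finite π).toFinset.card := Finset.card_erase_lt_of_mem ha
          _ = n := hn
      have hσx : σ • x = x := ih _ hcard σ hσS rfl
      have hπeq : π = swapFP a b * σ := by
        rw [hσdef, ← mul_assoc]
        have hss : swapFP a b * swapFP a b = 1 := by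
          apply Subtype.ext
          show Equiv.swap a b * Equiv.swap a b = 1
          simp
        rw [hss, one_mul]
      rw [hπeq, mul_smul, hσx]
      exact h a b haS hbS

lemma swap_fixes {S : Set A} {a b : A} (ha : a ∉ S) (hb : b ∉ S) :
    ∀ c ∈ S, swapFP a b • c = c := by
  intro c hc
  show Equiv.swap a b c = c
  exact Equiv.swap_apply_of_ne_of_ne (show c ≠ a from fun e => ha (by rw [← e]; exact hc))
    (show c ≠ b from fun e => hb (by rw [← e]; exact hc))

lemma mixed_swap {S₁ S₂ : Set A} {x : Y} (h₁f : S₁.Finite) (h₂f : S₂.Finite)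
    (h₁ : MulAction.Supports (finPerm A) S₁ x) (h₂ : MulAction.Supports (finPerm A) S₂ x)
    {a b : A} (ha2 : a ∉ S₂) (hb1 : b ∉ S₁) : swapFP a b • x = x := by
  by_cases hab : a = b
  · subst hab
    have : swapFP a a = 1 := Subtype.ext (Equiv.swap_self a)
    rw [this, one_smul]
  obtain ⟨c, hc⟩ := ((h₁f.union h₂f).union ((Set.finite_singleton a).insert b)).infinite_compl.nonempty
  simp only [Set.mem_compl_iff, Set.mem_union, Set.mem_insert_iff,
    Set.mem_singleton_iff, not_or] at hc
  obtain ⟨⟨hc1, hc2⟩, hcb, hca⟩ := hc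
  have key : swapFP a b = swapFP c a * swapFP b c * swapFP c a := by
    apply Subtype.ext
    show Equiv.swap a b = Equiv.swap c a * Equiv.swap b c * Equiv.swap c a
    exact (Equiv.swap_mul_swap_mul_swap (Ne.symm hcb) (show b ≠ a from fun e => hab e.symm)).symm
  have e1 : swapFP c a • x = x := h₂ _ (swap_fixes hc2 ha2)
  have e2 : swapFP b c • x = x := h₁ _ (swap_fixes hb1 hc1)
  rw [key, mul_smul, mul_smul, e1, e2, e1]

lemma inter_supports {S₁ S₂ : Set A} {x : Y} (h₁f : S₁.Finite) (h₂f : S₂.Finite)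
    (h₁ : MulAction.Supports (finPerm A) S₁ x) (h₂ : MulAction.Supports (finPerm A) S₂ x) :
    MulAction.Supports (finPerm A) (S₁ ∩ S₂) x := by
  apply fix_of_swaps
  intro a b ha hb
  simp only [Set.mem_inter_iff, not_and_or] at ha hb
  by_cases ha1 : a ∈ S₁ <;> by_cases hb1 : b ∈ S₁
  · exact h₂ _ (swap_fixes (ha.resolve_left (absurd ha1)) (hb.resolve_left (absurd hb1)))
  · exact mixed_swap h₁f h₂f h₁ h₂ (ha.resolve_left (absurd ha1)) hb1
  · have hswap : swapFP a b = swapFP b a := Subtype.ext (Equiv.swap_comm a b)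
    rw [hswap]
    exact mixed_swap h₁f h₂f h₁ h₂ (hb.resolve_left (absurd hb1)) ha1
  · exact h₁ _ (swap_fixes ha1 hb1)

/-- `M` is the least finite support of `x`. -/
def IsLeastSupp (A : Type*) {Y : Type*} [MulAction (finPerm A) Y] (x : Y) (M : Set A) : Prop :=
  M.Finite ∧ MulAction.Supports (finPerm A) M x ∧
    ∀ T : Set A, T.Finite → MulAction.Supports (finPerm A) T x → M ⊆ T

lemma exists_least_supp {x : Y} (hx : FinitelySupported A x) : ∃ M, IsLeastSupp A x M := by
  obtain ⟨T₀, hT₀f, hT₀⟩ := hx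
  set K : Set ℕ := {k | ∃ S : Set A, S ⊆ T₀ ∧ MulAction.Supports (finPerm A) S x ∧ S.ncard = k}
  have hKne : K.Nonempty := ⟨T₀.ncard, T₀, subset_rfl, hT₀, rfl⟩
  obtain ⟨M, hMT₀, hMsupp, hMcard⟩ := Nat.sInf_mem hKne
  have hMf : M.Finite := hT₀f.subset hMT₀
  refine ⟨M, hMf, hMsupp, ?_⟩
  intro T hTf hTsupp
  have hint : MulAction.Supports (finPerm A) (M ∩ T) x := inter_supports hMf hTf hMsupp hTsupp
  have hmem : (M ∩ T).ncard ∈ K := ⟨M ∩ T, Set.inter_subset_left.trans hMT₀, hint, rfl⟩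
  have hle : sInf K ≤ (M ∩ T).ncard := Nat.sInf_le hmem
  have heq : M ∩ T = M :=
    Set.eq_of_subset_of_ncard_le Set.inter_subset_left (by rw [hMcard]; exact hle) hMf
  intro a haM
  have : a ∈ M ∩ T := by rw [heq]; exact haM
  exact this.2

lemma least_supp_unique {x : Y} {M₁ M₂ : Set A}
    (h₁ : IsLeastSupp A x M₁) (h₂ : IsLeastSupp A x M₂) : M₁ = M₂ :=
  Set.Subset.antisymm (h₁.2.2 _ h₂.1 h₂.2.1) (h₂.2.2 _ h₁.1 h₁.2.1)

lemma least_supp_smul {x : Y} {M : Set A} (hM : IsLeastSupp A x M) (π : finPerm A) :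
    IsLeastSupp A (π • x) ((π : Equiv.Perm A) '' M) := by
  obtain ⟨hMf, hMsupp, hMleast⟩ := hM
  refine ⟨hMf.image _, ?_, ?_⟩
  · intro σ hσ
    have hfix : ∀ a ∈ M, (π⁻¹ * σ * π) • a = a := by
      intro a haM
      have h1 : σ • ((π : Equiv.Perm A) a) = (π : Equiv.Perm A) a :=
        hσ ⟨a, haM, rfl⟩
      show (π⁻¹ * σ * π) • a = a
      rw [mul_smul, mul_smul]
      have hπa : π • a = (π : Equiv.Perm A) a := rfl
      rw [hπa, h1]
      show (π : Equiv.Perm A).symm ((π : Equiv.Perm A) a) = a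
      exact Equiv.symm_apply_apply _ _
    have h2 : (π⁻¹ * σ * π) • x = x := hMsupp _ hfix
    calc σ • π • x = π • (π⁻¹ * σ * π) • x := by
          rw [← mul_smul, ← mul_smul, ← mul_assoc, ← mul_assoc, mul_inv_cancel, one_mul]
      _ = π • x := by rw [h2]
  · intro T hTf hTsupp
    have hpre : MulAction.Supports (finPerm A) ((π : Equiv.Perm A).symm '' T) x := by
      intro σ hσ
      have hfix : ∀ a ∈ T, (π * σ * π⁻¹) • a = a := by
        intro a haT
        have h1 : σ • ((π : Equiv.Perm A).symm a) = (π : Equiv.Perm A).symm a :=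
          hσ ⟨a, haT, rfl⟩
        show (π * σ * π⁻¹) • a = a
        rw [mul_smul, mul_smul]
        have hinva : π⁻¹ • a = (π : Equiv.Perm A).symm a := rfl
        rw [hinva, h1]
        show (π : Equiv.Perm A) ((π : Equiv.Perm A).symm a) = a
        exact Equiv.apply_symm_apply _ _
      have h2 : (π * σ * π⁻¹) • (π • x) = π • x := hTsupp _ hfix
      have h3 : π • σ • x = π • x := by
        calc π • σ • x = (π * σ * π⁻¹) • (π • x) := by
              rw [← mul_smul, ← mul_smul, mul_assoc, inv_mul_cancel, mul_one]
          _ = π • x := h2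
      exact smul_left_cancel π h3
    have hsub : M ⊆ (π : Equiv.Perm A).symm '' T := hMleast _ (hTf.image _) hpre
    intro b hb
    obtain ⟨a, haM, rfl⟩ := hb
    obtain ⟨t, htT, hta⟩ := hsub haM
    have hat : (π : Equiv.Perm A) a = t := by rw [← hta]; exact Equiv.apply_symm_apply _ _
    rwa [hat]

lemma supports_of_finite_orbit (hinv : ∀ y : Y, FinitelySupported A y)
    {S : Set A} (hSf : S.Finite) {x : Y} {Z : Set Y} (hZfin : Z.Finite)
    (horb : ∀ π : finPerm A, (∀ a ∈ S, π • a = a) → π • x ∈ Z) :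
    MulAction.Supports (finPerm A) S x := by
  obtain ⟨M, hM⟩ := exists_least_supp (hinv x)
  have hMS : M ⊆ S := by
    by_contra hns
    obtain ⟨a, haM, haS⟩ := Set.not_subset.mp hns
    set s : Set A := (M ∪ S ∪ {a})ᶜ
    have hsinf : s.Infinite :=
      ((hM.1.union hSf).union (Set.finite_singleton a)).infinite_compl
    have hfix : ∀ c ∈ s, (∀ e ∈ S, swapFP a c • e = e) := by
      intro c hc
      simp only [s, Set.mem_compl_iff, Set.mem_union, Set.mem_singleton_iff, not_or] at hc
      exact swap_fixes haS hc.1.2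
    have hinj : Set.InjOn (fun c => swapFP a c • x) s := by
      intro c hc c' hc' heq
      by_contra hne
      simp only [s, Set.mem_compl_iff, Set.mem_union, Set.mem_singleton_iff, not_or] at hc hc'
      have hL₁ : IsLeastSupp A (swapFP a c • x) ((Equiv.swap a c) '' M) :=
        least_supp_smul hM (swapFP a c)
      have hL₂ : IsLeastSupp A (swapFP a c' • x) ((Equiv.swap a c') '' M) :=
        least_supp_smul hM (swapFP a c')
      have heq' : swapFP a c • x = swapFP a c' • x := heq
      have hL₂' : IsLeastSupp A (swapFP a c • x) ((Equiv.swap a c') '' M) := by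
        rw [heq']; exact hL₂
      have hLeq : (Equiv.swap a c) '' M = (Equiv.swap a c') '' M :=
        least_supp_unique hL₁ hL₂'
      have hcmem : c ∈ (Equiv.swap a c) '' M :=
        ⟨a, haM, Equiv.swap_apply_left a c⟩
      rw [hLeq] at hcmem
      obtain ⟨m, hmM, hmc⟩ := hcmem
      have hma : m ≠ a := by
        intro e; subst e
        rw [Equiv.swap_apply_left] at hmc
        exact hne hmc.symm
      have hmc' : m ≠ c' := by
        intro e; subst e
        rw [Equiv.swap_apply_right] at hmc
        exact hc.2 hmc.symm
      rw [Equiv.swap_apply_of_ne_of_ne hma hmc'] at hmc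
      exact hc.1.1 (by rw [← hmc]; exact hmM)
    have himg : (fun c => swapFP a c • x) '' s ⊆ Z := by
      rintro y ⟨c, hcs, rfl⟩
      exact horb _ (hfix c hcs)
    exact (hsinf.image hinj) (hZfin.subset himg)
  intro π hπ
  exact hM.2.1 π (fun a haM => hπ (hMS haM))

end Aux

/-- if a finitely supported subset `X` of an invariant set `Y` contains no
infinite uniformly supported subset, then neither does its uniform powerset `℘_us(X)`. -/
theorem stmt3 {A Y : Type*} [Infinite A] [MulAction (finPerm A) Y]
    (hinv : ∀ y : Y, FinitelySupported A y) (X : Set Y)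
    (hX : FinitelySupported A X) (h : NoInfUS A X) :
    NoInfUS A (usPowerset A X) := by
  intro W hW hWus
  obtain ⟨S, hSf, hSsupp⟩ := hWus
  have hZfin : ∀ Z ∈ W, Z.Finite := fun Z hZ => h Z (hW hZ).1 (hW hZ).2
  have hU : ∀ x ∈ ⋃₀ W, MulAction.Supports (finPerm A) S x := by
    rintro x ⟨Z, hZW, hxZ⟩
    apply supports_of_finite_orbit hinv hSf (hZfin Z hZW)
    intro π hπ
    have hZZ : π • Z = Z := hSsupp Z hZW π hπ
    rw [← hZZ]
    exact Set.smul_mem_smul_set hxZ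
  have hUsub : ⋃₀ W ⊆ X := by
    rintro x ⟨Z, hZW, hxZ⟩
    exact (hW hZW).1 hxZ
  have hUfin : (⋃₀ W).Finite := h _ hUsub ⟨S, hSf, hU⟩
  exact hUfin.finite_subsets.subset (fun Z hZ => Set.subset_sUnion_of_mem hZ)
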